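/- In the Drasin–Sastry parameter construction, for every n ≥ n₀ with 2 r_n ≤ r_{n+1} one has L(2 r_n) ≥ 2^n · L(r_n) = 2^n · r_{n+1}. -/

import Mathlib

open Filter

/-- In the Drasin–Sastry parameter construction, for every `n ≥ n₀` with `2 r_n ≤ r_{n+1}` one has `L (2 r_n) ≥ 2^n · L (r_n) = 2^n · r_{n+1}`. -/
theorem drasinSastry_L_two_rn_lower (n₀ : ℕ) (hn₀ : 2 ≤ n₀) (R' : ℝ) (hR' : 4 < R')
    (ν : ℝ → ℝ) (r : ℕ → ℝ)
    (hν₀ : ∀ t : ℝ, 0 ≤ t → t ≤ R' → ν t = n₀)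
    (hrn₀ : r n₀ = R')
    (hrec : ∀ n : ℕ, n₀ ≤ n → r (n + 1) = Real.exp (∫ t in (1 : ℝ)..(r n), ν t / t))
    (hνlin : ∀ n : ℕ, n₀ ≤ n → ∀ t : ℝ, r n ≤ t → t ≤ r (n + 1) →
      ν t = (t - r n) / (r (n + 1) - r n) + n)
    (L : ℝ → ℝ) (hL : ∀ s : ℝ, L s = Real.exp (∫ t in (1 : ℝ)..s, ν t / t)) :
    ∀ n : ℕ, n₀ ≤ n → 2 * r n ≤ r (n + 1) →
      (2 : ℝ) ^ n * L (r n) ≤ L (2 * r n) ∧ L (r n) = r (n + 1) := by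
  set f : ℝ → ℝ := fun t => ν t / t with hf
  have key : ∀ n : ℕ, n₀ ≤ n → R' ≤ r n ∧ IntervalIntegrable f MeasureTheory.volume 1 (r n) ∧
      ∀ t : ℝ, 1 ≤ t → t ≤ r n → (1 : ℝ) ≤ ν t := by
    intro n hn
    induction n, hn using Nat.le_induction with
    | base =>
      refine ⟨le_of_eq hrn₀.symm, ?_, ?_⟩
      · have hcont : ContinuousOn (fun t : ℝ => (n₀ : ℝ) / t) (Set.uIcc 1 (r n₀)) := by
          refine ContinuousOn.div continuousOn_const continuousOn_id fun t ht => ?_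
          rw [Set.uIcc_of_le (by rw [hrn₀]; linarith)] at ht
          exact ne_of_gt (by have := ht.1; (try simp only [id_eq]); linarith)
        refine hcont.intervalIntegrable.congr ?_
        intro t ht
        rw [Set.uIoc_of_le (by rw [hrn₀]; linarith)] at ht
        show (n₀ : ℝ) / t = ν t / t
        rw [hν₀ t (by linarith [ht.1]) (by rw [hrn₀] at ht; exact ht.2)]
      · intro t ht1 ht2
        rw [hν₀ t (by linarith) (hrn₀ ▸ ht2)]
        exact_mod_cast le_trans (by norm_num) hn₀
    | succ n hn ih =>
      obtain ⟨hR'n, hint, hν1⟩ := ih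
      have h1rn : (1 : ℝ) ≤ r n := by linarith
      have hrnpos : (0 : ℝ) < r n := by linarith
      have hmono : r n ≤ r (n + 1) := by
        rw [hrec n hn]
        have hint1 : IntervalIntegrable (fun t : ℝ => 1 / t) MeasureTheory.volume 1 (r n) := by
          apply ContinuousOn.intervalIntegrable
          refine ContinuousOn.div continuousOn_const continuousOn_id fun t ht => ?_
          rw [Set.uIcc_of_le h1rn] at ht
          exact ne_of_gt (by have := ht.1; (try simp only [id_eq]); linarith)
        have hle : ∫ t in (1:ℝ)..(r n), 1 / t ≤ ∫ t in (1:ℝ)..(r n), f t := by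
          apply intervalIntegral.integral_mono_on h1rn hint1 hint
          intro t ht
          have ht0 : (0:ℝ) < t := lt_of_lt_of_le one_pos ht.1
          show (1:ℝ) / t ≤ ν t / t
          gcongr
          exact hν1 t ht.1 ht.2
        have hlog : ∫ t in (1:ℝ)..(r n), 1 / t = Real.log (r n) := by
          rw [integral_one_div (by rw [Set.uIcc_of_le h1rn]; intro h; linarith [h.1]), div_one]
        calc r n = Real.exp (Real.log (r n)) := (Real.exp_log hrnpos).symm
          _ ≤ _ := by apply Real.exp_le_exp.2; rw [← hlog]; exact hle
      have hΔ : (0:ℝ) ≤ r (n + 1) - r n := by linarith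
      have hint2 : IntervalIntegrable f MeasureTheory.volume (r n) (r (n + 1)) := by
        have hnum : ContinuousOn (fun t : ℝ => (t - r n) / (r (n + 1) - r n) + (n : ℝ))
            (Set.uIcc (r n) (r (n + 1))) :=
          ((continuousOn_id.sub continuousOn_const).div_const _).add continuousOn_const
        have hcont := hnum.div continuousOn_id (fun t ht => by
          rw [Set.uIcc_of_le hmono] at ht
          exact ne_of_gt (by have := ht.1; (try simp only [id_eq]); linarith))
        refine hcont.intervalIntegrable.congr ?_
        intro t ht
        rw [Set.uIoc_of_le hmono] at ht
        show ((t - r n) / (r (n + 1) - r n) + (n : ℝ)) / t = ν t / t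
        rw [hνlin n hn t ht.1.le ht.2]
      refine ⟨le_trans hR'n hmono, hint.trans hint2, ?_⟩
      intro t ht1 ht2
      by_cases hc : t ≤ r n
      · exact hν1 t ht1 hc
      · push_neg at hc
        rw [hνlin n hn t hc.le ht2]
        have h0 : (0:ℝ) ≤ (t - r n) / (r (n + 1) - r n) :=
          div_nonneg (by linarith) hΔ
        have : (1:ℝ) ≤ (n:ℝ) := by exact_mod_cast le_trans (by norm_num) (le_trans hn₀ hn)
        linarith
  intro n hn h2
  obtain ⟨hR'n, hint, hν1⟩ := key n hn
  have hLrn : L (r n) = r (n + 1) := by rw [hL, hrec n hn]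
  have hrnpos : (0:ℝ) < r n := by linarith
  have h2rn : r n ≤ 2 * r n := by linarith
  have hlin := hνlin n hn
  have hint2 : IntervalIntegrable f MeasureTheory.volume (r n) (2 * r n) := by
    have hnum : ContinuousOn (fun t : ℝ => (t - r n) / (r (n + 1) - r n) + (n : ℝ))
        (Set.uIcc (r n) (2 * r n)) :=
      ((continuousOn_id.sub continuousOn_const).div_const _).add continuousOn_const
    have hcont := hnum.div continuousOn_id (fun t ht => by
      rw [Set.uIcc_of_le h2rn] at ht
      exact ne_of_gt (by have := ht.1; (try simp only [id_eq]); linarith))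
    refine hcont.intervalIntegrable.congr ?_
    intro t ht
    rw [Set.uIoc_of_le h2rn] at ht
    show ((t - r n) / (r (n + 1) - r n) + (n : ℝ)) / t = ν t / t
    rw [hlin t ht.1.le (ht.2.trans h2)]
  have hintc : IntervalIntegrable (fun t : ℝ => (n : ℝ) * (1 / t))
      MeasureTheory.volume (r n) (2 * r n) := by
    apply ContinuousOn.intervalIntegrable
    apply ContinuousOn.mul continuousOn_const
    refine ContinuousOn.div continuousOn_const continuousOn_id fun t ht => ?_
    rw [Set.uIcc_of_le h2rn] at ht
    exact ne_of_gt (by have := ht.1; (try simp only [id_eq]); linarith)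
  have hlow : (n : ℝ) * Real.log 2 ≤ ∫ t in (r n)..(2 * r n), f t := by
    have h0 : (0:ℝ) ∉ Set.uIcc (r n) (2 * r n) := by
      rw [Set.uIcc_of_le h2rn]; intro h; linarith [h.1]
    have hval : ∫ t in (r n)..(2 * r n), (n : ℝ) * (1 / t) = (n : ℝ) * Real.log 2 := by
      rw [intervalIntegral.integral_const_mul, integral_one_div h0,
        mul_div_assoc, div_self hrnpos.ne', mul_one]
    rw [← hval]
    apply intervalIntegral.integral_mono_on h2rn hintc hint2
    intro t ht
    have ht0 : (0:ℝ) < t := lt_of_lt_of_le hrnpos ht.1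
    have hνge : (n : ℝ) ≤ ν t := by
      rw [hlin t ht.1 (ht.2.trans h2)]
      have h0' : (0:ℝ) ≤ (t - r n) / (r (n + 1) - r n) :=
        div_nonneg (by linarith [ht.1]) (by linarith)
      linarith
    rw [mul_one_div]
    show (n : ℝ) / t ≤ ν t / t
    gcongr
  refine ⟨?_, hLrn⟩
  rw [hL (2 * r n), hL (r n),
    ← intervalIntegral.integral_add_adjacent_intervals hint hint2,
    Real.exp_add, mul_comm]
  apply mul_le_mul_of_nonneg_left _ (Real.exp_pos _).le
  calc (2:ℝ) ^ n = Real.exp (Real.log 2) ^ n := by rw [Real.exp_log two_pos]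
    _ = Real.exp ((n : ℝ) * Real.log 2) := by rw [← Real.exp_nat_mul]
    _ ≤ _ := Real.exp_le_exp.2 hlow
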